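/- Let p ≥ 1 and α_1,…,α_p ∈ [0,1] with α_p > 0, and let A be the associated p×p companion matrix. Then ρ(A) < 1 if and only if Σ_{k=1}^p α_k < 1, ρ(A) = 1 if and only if Σ_{k=1}^p α_k = 1, and ρ(A) > 1 if and only if Σ_{k=1}^p α_k > 1. -/

import Mathlib

open Matrix

noncomputable section

/-- The companion matrix with first row `(α_1, …, α_p)` and subdiagonal entries `1`. -/
def companion (p : ℕ) (α : Fin p → ℝ) : Matrix (Fin p) (Fin p) ℝ :=
  Matrix.of fun i j => if (i : ℕ) = 0 then α j else if (i : ℕ) = (j : ℕ) + 1 then 1 else 0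

/-- The spectral radius of a real matrix: the maximum (supremum) of the moduli of its
complex eigenvalues. -/
def specRad {p : ℕ} (A : Matrix (Fin p) (Fin p) ℝ) : ℝ :=
  sSup {r : ℝ | ∃ z ∈ spectrum ℂ (A.map (Complex.ofReal : ℝ → ℂ)), ‖z‖ = r}

lemma spec_iff (p : ℕ) (hp : 0 < p) (α : Fin p → ℝ) (z : ℂ) :
    z ∈ spectrum ℂ ((companion p α).map (Complex.ofReal : ℝ → ℂ)) ↔
      z ^ p = ∑ k : Fin p, (α k : ℂ) * z ^ (p - 1 - (k : ℕ)) := by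
  set M := (companion p α).map (Complex.ofReal : ℝ → ℂ) with hMdef
  have hM : ∀ i j, M i j = if (i : ℕ) = 0 then (α j : ℂ)
      else if (i : ℕ) = (j : ℕ) + 1 then 1 else 0 := by
    intro i j
    simp only [hMdef, Matrix.map_apply, companion, Matrix.of_apply]
    split_ifs <;> simp
  have key : z ∈ spectrum ℂ M ↔ ∃ v, v ≠ 0 ∧ M.mulVec v = z • v := by
    rw [spectrum.mem_iff, Matrix.isUnit_iff_isUnit_det, isUnit_iff_ne_zero, not_not,
      ← Matrix.exists_mulVec_eq_zero_iff]
    constructor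
    · rintro ⟨v, hv, h⟩
      refine ⟨v, hv, ?_⟩
      rw [Algebra.algebraMap_eq_smul_one, Matrix.sub_mulVec, Matrix.smul_mulVec,
        Matrix.one_mulVec, sub_eq_zero] at h
      exact h.symm
    · rintro ⟨v, hv, h⟩
      refine ⟨v, hv, ?_⟩
      rw [Algebra.algebraMap_eq_smul_one, Matrix.sub_mulVec, Matrix.smul_mulVec,
        Matrix.one_mulVec, sub_eq_zero, h]
  rw [key]
  constructor
  · rintro ⟨v, hv, heq⟩
    have hstep : ∀ m (h : m + 1 < p), v ⟨m, by omega⟩ = z * v ⟨m + 1, h⟩ := by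
      intro m h
      have := congrFun heq ⟨m + 1, h⟩
      rw [Matrix.mulVec, dotProduct] at this
      rw [Finset.sum_eq_single_of_mem (⟨m, by omega⟩ : Fin p) (Finset.mem_univ _)] at this
      · rw [hM] at this
        simp only [Pi.smul_apply, smul_eq_mul] at this
        simpa using this
      · intro b _ hb
        rw [hM]
        have hb' : (b : ℕ) ≠ m := fun hc => hb (Fin.ext hc)
        simp only [Nat.succ_ne_zero, if_false, add_left_cancel_iff]
        rw [if_neg (by omega), mul_comm, mul_zero]
    have hlast : (p : ℕ) - 1 < p := by omega
    have hrep : ∀ d (i : Fin p), p - 1 - (i : ℕ) = d → v i = z ^ d * v ⟨p - 1, hlast⟩ := by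
      intro d
      induction d with
      | zero =>
        intro i hi
        have : i = ⟨p - 1, hlast⟩ := Fin.ext (by simp only [Fin.val_mk]; omega)
        rw [this]; ring
      | succ d ih =>
        intro i hi
        have h1 : (i : ℕ) + 1 < p := by omega
        have hi' : (⟨(i : ℕ), i.2⟩ : Fin p) = i := Fin.ext rfl
        have := hstep (i : ℕ) h1
        rw [hi'] at this
        rw [this, ih ⟨(i : ℕ) + 1, h1⟩ (by simp; omega)]
        ring
    have hvl : v ⟨p - 1, hlast⟩ ≠ 0 := by
      intro h0
      apply hv
      funext i
      rw [hrep (p - 1 - (i : ℕ)) i rfl, h0, mul_zero, Pi.zero_apply]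
    have hrow0 := congrFun heq ⟨0, hp⟩
    rw [Matrix.mulVec, dotProduct] at hrow0
    simp only [Pi.smul_apply, smul_eq_mul] at hrow0
    have hL : ∀ j : Fin p, M ⟨0, hp⟩ j * v j
        = ((α j : ℂ) * z ^ (p - 1 - (j : ℕ))) * v ⟨p - 1, hlast⟩ := by
      intro j
      rw [hM, hrep (p - 1 - (j : ℕ)) j rfl,
        if_pos (show ((⟨0, hp⟩ : Fin p) : ℕ) = 0 from rfl)]
      ring
    rw [Finset.sum_congr rfl fun j _ => hL j, ← Finset.sum_mul] at hrow0
    rw [hrep (p - 1) ⟨0, hp⟩ (by simp)] at hrow0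
    have : (∑ j : Fin p, (α j : ℂ) * z ^ (p - 1 - (j : ℕ))) * v ⟨p - 1, hlast⟩
        = z ^ p * v ⟨p - 1, hlast⟩ := by
      rw [hrow0, ← mul_assoc, ← pow_succ']
      congr 2
      omega
    exact (mul_right_cancel₀ hvl this).symm
  · intro h
    refine ⟨fun i => z ^ (p - 1 - (i : ℕ)), ?_, ?_⟩
    · intro h0
      have := congrFun h0 ⟨p - 1, by omega⟩
      simp at this
    · funext i
      rw [Matrix.mulVec, dotProduct]
      rcases Nat.eq_zero_or_pos (i : ℕ) with hi | hi
      · have : ∀ j : Fin p, M i j * z ^ (p - 1 - (j : ℕ))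
            = (α j : ℂ) * z ^ (p - 1 - (j : ℕ)) := by
          intro j; rw [hM, if_pos hi]
        rw [Finset.sum_congr rfl fun j _ => this j, ← h]
        simp only [Pi.smul_apply, smul_eq_mul, hi]
        rw [← pow_succ']
        congr 1
        omega
      · obtain ⟨m, hm⟩ : ∃ m, (i : ℕ) = m + 1 := ⟨(i : ℕ) - 1, by omega⟩
        have hmp : m < p := by omega
        rw [Finset.sum_eq_single_of_mem (⟨m, hmp⟩ : Fin p) (Finset.mem_univ _)]
        · rw [hM]
          simp only [Pi.smul_apply, smul_eq_mul]
          rw [if_neg (by omega), if_pos (by simp [hm])]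
          rw [one_mul, ← pow_succ']
          congr 1
          omega
        · intro b _ hb
          rw [hM, if_neg (by omega), if_neg, zero_mul]
          simp only [hm, add_left_cancel_iff]
          intro hc
          exact hb (Fin.ext (by simp only [Fin.val_mk]; omega))

lemma abs_le_bound (p : ℕ) (hp : 0 < p) (α : Fin p → ℝ)
    (hα : ∀ i, α i ∈ Set.Icc (0 : ℝ) 1) (z : ℂ)
    (h : z ^ p = ∑ k : Fin p, (α k : ℂ) * z ^ (p - 1 - (k : ℕ))) :
    ‖z‖ ≤ max (∑ k : Fin p, α k) ((∑ k : Fin p, α k) ^ ((p : ℝ)⁻¹)) := by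
  set S := ∑ k : Fin p, α k with hS
  have hS0 : 0 ≤ S := Finset.sum_nonneg fun i _ => (hα i).1
  set t := ‖z‖ with ht
  have ht0 : 0 ≤ t := norm_nonneg z
  have habs : t ^ p ≤ ∑ k : Fin p, α k * t ^ (p - 1 - (k : ℕ)) := by
    calc t ^ p = ‖z ^ p‖ := (norm_pow z p).symm
    _ = ‖∑ k : Fin p, (α k : ℂ) * z ^ (p - 1 - (k : ℕ))‖ := by rw [h]
    _ ≤ ∑ k : Fin p, ‖(α k : ℂ) * z ^ (p - 1 - (k : ℕ))‖ :=
        norm_sum_le _ _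
    _ = ∑ k : Fin p, α k * t ^ (p - 1 - (k : ℕ)) := by
        refine Finset.sum_congr rfl fun k _ => ?_
        rw [norm_mul, norm_pow, Complex.norm_real, Real.norm_of_nonneg (hα k).1]
  rcases le_or_gt t 1 with h1 | h1
  · have htS : t ^ p ≤ S := by
      refine habs.trans ?_
      rw [hS]
      refine Finset.sum_le_sum fun k _ => ?_
      calc α k * t ^ (p - 1 - (k : ℕ)) ≤ α k * 1 := by
            refine mul_le_mul_of_nonneg_left ?_ (hα k).1
            exact pow_le_one₀ ht0 h1
        _ = α k := mul_one _
    refine le_trans ?_ (le_max_right _ _)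
    by_contra hc
    push_neg at hc
    have h2 : (S ^ ((p : ℝ)⁻¹)) ^ p < t ^ p :=
      pow_lt_pow_left₀ hc (Real.rpow_nonneg hS0 _) (by omega)
    rw [Real.rpow_inv_natCast_pow hS0 hp.ne'] at h2
    linarith
  · have htS : t ^ (p - 1) * t ≤ S * t ^ (p - 1) := by
      have h2 : t ^ (p - 1) * t = t ^ p := by
        rw [← pow_succ]
        congr 1
        omega
      rw [h2]
      refine habs.trans ?_
      calc ∑ k : Fin p, α k * t ^ (p - 1 - (k : ℕ))
          ≤ ∑ k : Fin p, α k * t ^ (p - 1) := by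
            refine Finset.sum_le_sum fun k _ => ?_
            refine mul_le_mul_of_nonneg_left ?_ (hα k).1
            exact pow_le_pow_right₀ h1.le (by omega)
        _ = S * t ^ (p - 1) := by rw [hS, Finset.sum_mul]
    have hpow : (0 : ℝ) < t ^ (p - 1) := pow_pos (by linarith) _
    have : t ≤ S := by
      rw [mul_comm S] at htS
      exact le_of_mul_le_mul_left (by linarith [htS]) hpow
    exact this.trans (le_max_left _ _)

theorem specRad_trichotomy'
    (p : ℕ) (hp : 0 < p) (α : Fin p → ℝ)
    (hα : ∀ i, α i ∈ Set.Icc (0 : ℝ) 1)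
    (hαp : 0 < α ⟨p - 1, Nat.sub_lt hp Nat.one_pos⟩) :
    (specRad (companion p α) < 1 ↔ ∑ k : Fin p, α k < 1) ∧
    (specRad (companion p α) = 1 ↔ ∑ k : Fin p, α k = 1) ∧
    (1 < specRad (companion p α) ↔ 1 < ∑ k : Fin p, α k) := by
  set S := ∑ k : Fin p, α k with hSdef
  have hS0 : 0 < S := by
    have := Finset.single_le_sum (f := α) (fun i _ => (hα i).1)
      (Finset.mem_univ ⟨p - 1, by omega⟩)
    linarith
  set c := max S (S ^ ((p : ℝ)⁻¹)) with hc
  set R := {r : ℝ | ∃ z ∈ spectrum ℂ ((companion p α).map (Complex.ofReal : ℝ → ℂ)),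
    ‖z‖ = r} with hR
  have hspecRad : specRad (companion p α) = sSup R := rfl
  have hub : ∀ r ∈ R, r ≤ c := by
    rintro r ⟨z, hz, rfl⟩
    exact abs_le_bound p hp α hα z ((spec_iff p hp α z).mp hz)
  have hbdd : BddAbove R := ⟨c, hub⟩
  have hc0 : 0 ≤ c := le_trans hS0.le (le_max_left _ _)
  have key1 : S < 1 → specRad (companion p α) < 1 := by
    intro hS1
    have hc1 : c < 1 := max_lt hS1 (Real.rpow_lt_one hS0.le hS1 (by positivity))
    calc specRad (companion p α) = sSup R := hspecRad
      _ ≤ c := Real.sSup_le hub hc0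
      _ < 1 := hc1
  have key2 : S = 1 → specRad (companion p α) = 1 := by
    intro hS1
    have hmem : (1 : ℝ) ∈ R := by
      refine ⟨1, (spec_iff p hp α 1).mpr ?_, by simp⟩
      simp only [one_pow, mul_one]
      rw [← Complex.ofReal_sum]
      rw [← hSdef, hS1, Complex.ofReal_one]
    refine le_antisymm ?_ ?_
    · rw [hspecRad]
      refine Real.sSup_le (fun r hr => ?_) zero_le_one
      refine (hub r hr).trans ?_
      rw [hc, hS1, Real.one_rpow, max_self]
    · rw [hspecRad]
      exact le_csSup hbdd hmem
  have key3 : 1 < S → 1 < specRad (companion p α) := by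
    intro hS1
    set f : ℝ → ℝ := fun t => t ^ p - ∑ k : Fin p, α k * t ^ (p - 1 - (k : ℕ)) with hf
    have hcont : ContinuousOn f (Set.Icc 1 S) := by
      refine Continuous.continuousOn ?_
      exact (continuous_pow p).sub
        (continuous_finset_sum _ fun k _ => continuous_const.mul (continuous_pow _))
    have hf1 : f 1 = 1 - S := by simp [hf, hSdef]
    have hfS : 0 ≤ f S := by
      have h2 : ∑ k : Fin p, α k * S ^ (p - 1 - (k : ℕ)) ≤ S ^ p := by
        calc ∑ k : Fin p, α k * S ^ (p - 1 - (k : ℕ))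
            ≤ ∑ k : Fin p, α k * S ^ (p - 1) := by
              refine Finset.sum_le_sum fun k _ => ?_
              exact mul_le_mul_of_nonneg_left
                (pow_le_pow_right₀ hS1.le (by omega)) (hα k).1
          _ = S * S ^ (p - 1) := by rw [← Finset.sum_mul, ← hSdef, mul_comm]
          _ = S ^ p := by rw [← pow_succ']; congr 1; omega
      simp only [hf]
      linarith
    have h0mem : (0 : ℝ) ∈ Set.Icc (f 1) (f S) := ⟨by rw [hf1]; linarith, hfS⟩
    obtain ⟨r, hrmem, hr0⟩ := intermediate_value_Icc hS1.le hcont h0mem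
    have hrne : r ≠ 1 := by
      intro h
      rw [h, hf1] at hr0
      linarith
    have hr1 : 1 < r := lt_of_le_of_ne hrmem.1 (Ne.symm hrne)
    have hreq : r ^ p = ∑ k : Fin p, α k * r ^ (p - 1 - (k : ℕ)) := by
      have h2 : r ^ p - ∑ k : Fin p, α k * r ^ (p - 1 - (k : ℕ)) = 0 := by
        simpa [hf] using hr0
      linarith [h2]
    have hmem : r ∈ R := by
      refine ⟨(r : ℂ), (spec_iff p hp α r).mpr ?_, ?_⟩
      · exact_mod_cast congrArg (Complex.ofReal : ℝ → ℂ) hreq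
      · rw [Complex.norm_real, Real.norm_eq_abs]
        exact abs_of_nonneg (by linarith)
    calc (1 : ℝ) < r := hr1
      _ ≤ sSup R := le_csSup hbdd hmem
      _ = specRad (companion p α) := hspecRad.symm
  rcases lt_trichotomy S 1 with h | h | h
  · have h1 := key1 h
    exact ⟨⟨fun _ => h, fun _ => h1⟩,
      ⟨fun hc => absurd hc (by linarith), fun hc => absurd hc (by linarith)⟩,
      ⟨fun hc => absurd hc (by linarith), fun hc => absurd hc (by linarith)⟩⟩
  · have h1 := key2 h
    exact ⟨⟨fun hc => absurd hc (by rw [h1]; exact lt_irrefl 1),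
        fun hc => absurd hc (by linarith)⟩,
      ⟨fun _ => h, fun _ => h1⟩,
      ⟨fun hc => absurd hc (by rw [h1]; exact lt_irrefl 1),
        fun hc => absurd hc (by linarith)⟩⟩
  · have h1 := key3 h
    exact ⟨⟨fun hc => absurd hc (by linarith), fun hc => absurd hc (by linarith)⟩,
      ⟨fun hc => absurd hc (by linarith), fun hc => absurd hc (by linarith)⟩,
      ⟨fun _ => h, fun _ => h1⟩⟩


/-- `ρ(A) < 1 ↔ Σ α_k < 1`, `ρ(A) = 1 ↔ Σ α_k = 1`, `ρ(A) > 1 ↔ Σ α_k > 1`. -/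
theorem specRad_trichotomy
    (p : ℕ) (hp : 0 < p) (α : Fin p → ℝ)
    (hα : ∀ i, α i ∈ Set.Icc (0 : ℝ) 1)
    (hαp : 0 < α ⟨p - 1, by omega⟩) :
    (specRad (companion p α) < 1 ↔ ∑ k : Fin p, α k < 1) ∧
    (specRad (companion p α) = 1 ↔ ∑ k : Fin p, α k = 1) ∧
    (1 < specRad (companion p α) ↔ 1 < ∑ k : Fin p, α k) := by
  exact specRad_trichotomy' p hp α hα hαp

end
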